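/- The duality map D_Ω sending (x,h) to (h,x) is a homeomorphism from the augmented boundary of a properly convex open domain Ω to the augmented boundary of its dual Ω*, with inverse D_{Ω*}. -/

import Mathlib

/-- The strict dual cone of `C`, identified with a subset of the same space via
the inner product. -/
def innerStrictDualCone {n : ℕ} (C : Set (EuclideanSpace ℝ (Fin n))) :
    Set (EuclideanSpace ℝ (Fin n)) :=
  {y | ∀ x ∈ closure C, x ≠ 0 → 0 < (inner ℝ y x : ℝ)}

/-- The augmented boundary of the properly convex domain with cone `C`: pairs
`(x, h)` of a unit boundary direction `x` of `C` and a unit vector `h`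
representing a supporting hyperplane of `C` at `x` (i.e. `⟪h, ·⟫ > 0` on `C`
and `⟪h, x⟫ = 0`). -/
def augBoundary {n : ℕ} (C : Set (EuclideanSpace ℝ (Fin n))) :
    Set (EuclideanSpace ℝ (Fin n) × EuclideanSpace ℝ (Fin n)) :=
  {p | p.1 ∈ frontier C ∧ ‖p.1‖ = 1 ∧ ‖p.2‖ = 1 ∧ (inner ℝ p.2 p.1 : ℝ) = 0 ∧
    ∀ y ∈ C, 0 < (inner ℝ p.2 y : ℝ)}

open Set

theorem augSwap_mem {n : ℕ} {C : Set (EuclideanSpace ℝ (Fin (n + 1)))}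
    (hopen : IsOpen C) (hconv : Convex ℝ C)
    (hcone : ∀ x ∈ C, ∀ t : ℝ, 0 < t → t • x ∈ C)
    (hne : C.Nonempty)
    (hprop : ∀ v ∈ closure C, -v ∈ closure C → v = 0) :
    ∀ p : EuclideanSpace ℝ (Fin (n + 1)) × EuclideanSpace ℝ (Fin (n + 1)),
      p ∈ augBoundary C ↔ p.swap ∈ augBoundary (innerStrictDualCone C) := by
  set D := innerStrictDualCone C with hDdef
  -- C is closed under addition
  have Cadd : ∀ a ∈ C, ∀ b ∈ C, a + b ∈ C := by
    intro a ha b hb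
    have h1 : (1 / 2 : ℝ) • a + (1 / 2 : ℝ) • b ∈ C :=
      hconv ha hb (by norm_num) (by norm_num) (by norm_num)
    have h2 := hcone _ h1 2 two_pos
    have : (2 : ℝ) • ((1 / 2 : ℝ) • a + (1 / 2 : ℝ) • b) = a + b := by
      rw [smul_add, smul_smul, smul_smul]; norm_num
    rwa [this] at h2
  -- the closed cone
  let K : ConvexCone ℝ (EuclideanSpace ℝ (Fin (n + 1))) :=
    { carrier := closure C
      smul_mem' := fun {c} hc {x} hx =>
        map_mem_closure (continuous_const_smul c) hx fun y hy => hcone y hy c hc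
      add_mem' := fun {x} hx {y} hy =>
        map_mem_closure₂ continuous_add hx hy Cadd }
  have hKcoe : (K : Set (EuclideanSpace ℝ (Fin (n + 1)))) = closure C := rfl
  have hKne : (K : Set (EuclideanSpace ℝ (Fin (n + 1)))).Nonempty := hne.closure
  have hKcl : IsClosed (K : Set (EuclideanSpace ℝ (Fin (n + 1)))) := isClosed_closure
  let P : ProperCone ℝ (EuclideanSpace ℝ (Fin (n + 1))) :=
    ⟨K.toPointedCone (ConvexCone.Pointed.of_nonempty_of_isClosed hKne hKcl), hKcl⟩
  have bidual := ProperCone.innerDual_innerDual P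
  set Kd : Set (EuclideanSpace ℝ (Fin (n + 1))) := (ProperCone.innerDual (closure C) : Set (EuclideanSpace ℝ (Fin (n + 1)))) with hKddef
  have memKd : ∀ y : EuclideanSpace ℝ (Fin (n + 1)), y ∈ Kd ↔ ∀ x ∈ closure C, 0 ≤ (inner ℝ x y : ℝ) := fun y =>
    Iff.rfl
  have hbid : ∀ x : EuclideanSpace ℝ (Fin (n + 1)), (∀ y ∈ Kd, 0 ≤ (inner ℝ y x : ℝ)) → x ∈ closure C := by
    intro x hx
    have : x ∈ ProperCone.innerDual (ProperCone.innerDual (P : Set (EuclideanSpace ℝ (Fin (n + 1)))) : Set (EuclideanSpace ℝ (Fin (n + 1)))) := by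
      rw [ProperCone.mem_innerDual]; exact hx
    rw [bidual] at this
    exact this
  have hDsubKd : D ⊆ Kd := by
    intro z hz
    rw [memKd]
    intro x hx
    rcases eq_or_ne x 0 with rfl | hx0
    · simp
    · rw [real_inner_comm]; exact (hz x hx hx0).le
  have h0Kd : (0 : EuclideanSpace ℝ (Fin (n + 1))) ∈ Kd := by rw [memKd]; intro x _; simp
  -- the span of Kd is everything
  have spanKd : Submodule.span ℝ Kd = ⊤ := by
    by_contra hspan
    have horth : (Submodule.span ℝ Kd)ᗮ ≠ ⊥ := by
      intro hbot
      exact hspan (Submodule.orthogonal_eq_bot_iff.mp hbot)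
    obtain ⟨u, hu, hu0⟩ := Submodule.ne_bot_iff _ |>.mp horth
    have key : ∀ z ∈ Kd, (inner ℝ z u : ℝ) = 0 := fun z hz =>
      (Submodule.mem_orthogonal _ u).mp hu z (Submodule.subset_span hz)
    have hu1 : u ∈ closure C := hbid u fun y hy => (key y hy).ge
    have hu2 : -u ∈ closure C := hbid (-u) fun y hy => by
      rw [inner_neg_right, key y hy, neg_zero]
    exact hu0 (hprop u hu1 hu2)
  -- Kd has nonempty interior
  have hKdconv : Convex ℝ Kd := (ProperCone.innerDual (closure C)).convex
  have hint : (interior Kd).Nonempty := by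
    rw [hKdconv.interior_nonempty_iff_affineSpan_eq_top,
      AffineSubspace.affineSpan_eq_top_iff_vectorSpan_eq_top_of_nonempty ℝ
        (EuclideanSpace ℝ (Fin (n + 1))) (EuclideanSpace ℝ (Fin (n + 1))) ⟨0, h0Kd⟩,
      vectorSpan_eq_span_vsub_set_right ℝ h0Kd]
    simpa using spanKd
  -- interior points of Kd lie in D
  have hintD : interior Kd ⊆ D := by
    intro z hz x hx hx0
    have hzKd : z ∈ Kd := interior_subset hz
    have h1 : 0 ≤ (inner ℝ x z : ℝ) := (memKd z).mp hzKd x hx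
    rcases h1.lt_or_eq with h1 | h1
    · rwa [real_inner_comm]
    · exfalso
      obtain ⟨ε, hε, hball⟩ := Metric.isOpen_iff.mp isOpen_interior z hz
      set c : ℝ := ε / (2 * ‖x‖) with hc
      have hxnorm : 0 < ‖x‖ := norm_pos_iff.mpr hx0
      have hcpos : 0 < c := by positivity
      have hw : z - c • x ∈ Kd := by
        apply interior_subset
        apply hball
        rw [Metric.mem_ball, dist_eq_norm]
        have heq : z - c • x - z = -(c • x) := by abel
        rw [heq, norm_neg, norm_smul, Real.norm_eq_abs, abs_of_pos hcpos]
        have : c * ‖x‖ = ε / 2 := by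
          rw [hc]; field_simp
        rw [this]; linarith
      have := (memKd _).mp hw x hx
      rw [inner_sub_right, ← h1, real_inner_smul_right, zero_sub, neg_nonneg] at this
      have hxx : 0 < (inner ℝ x x : ℝ) := by
        rw [real_inner_self_eq_norm_sq]; exact pow_pos hxnorm 2
      nlinarith
  have hDne : D.Nonempty := hint.mono hintD
  -- closure of D is Kd
  have closureD : closure D = Kd := by
    apply Subset.antisymm
    · exact closure_minimal hDsubKd (ProperCone.innerDual _).isClosed
    · intro h hh
      obtain ⟨z, hz⟩ := hDne
      have tend : Filter.Tendsto (fun k : ℕ => h + (1 / ((k : ℝ) + 1)) • z)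
          Filter.atTop (nhds h) := by
        have h1 : Filter.Tendsto (fun k : ℕ => 1 / ((k : ℝ) + 1)) Filter.atTop (nhds 0) :=
          tendsto_one_div_add_atTop_nhds_zero_nat
        have := Filter.Tendsto.add (tendsto_const_nhds (x := h))
          (h1.smul_const z)
        simpa using this
      refine mem_closure_of_tendsto tend (Filter.Eventually.of_forall fun k => ?_)
      intro x hx hx0
      have ht : (0 : ℝ) < 1 / ((k : ℝ) + 1) := by positivity
      have h2 : 0 ≤ (inner ℝ h x : ℝ) := by
        rw [real_inner_comm]; exact (memKd h).mp hh x hx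
      have h3 : 0 < (inner ℝ z x : ℝ) := hz x hx hx0
      rw [inner_add_left, real_inner_smul_left]
      nlinarith
  -- forward and backward
  rintro ⟨a, b⟩
  constructor
  · rintro ⟨hafr, hna, hnb, hinn, hpos⟩
    have haclos : a ∈ closure C := frontier_subset_closure hafr
    have ha0 : a ≠ 0 := fun h => by simp [h] at hna
    have hbKd : b ∈ Kd := by
      rw [memKd]
      intro x hx
      rw [real_inner_comm]
      have hclosed : IsClosed {x : EuclideanSpace ℝ (Fin (n + 1)) | 0 ≤ (inner ℝ b x : ℝ)} :=
        isClosed_le continuous_const (continuous_const.inner continuous_id)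
      exact closure_minimal (fun y hy => (hpos y hy).le) hclosed hx
    have hbnotD : b ∉ D := by
      intro hbD
      exact absurd (hbD a haclos ha0) (by rw [hinn]; exact lt_irrefl 0)
    have hbfr : b ∈ frontier D := by
      have h1 : b ∈ closure D := by rw [closureD]; exact hbKd
      have h2 : b ∉ interior D := fun h => hbnotD (interior_subset h)
      exact ⟨h1, h2⟩
    refine ⟨hbfr, hnb, hna, by rw [real_inner_comm]; exact hinn, ?_⟩
    intro y hy
    rw [real_inner_comm]
    exact hy a haclos ha0
  · rintro ⟨hbfr, hnb, hna, hinn, hpos⟩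
    simp only [Prod.swap_prod_mk] at hbfr hnb hna hinn hpos
    have hbKd : b ∈ Kd := by
      rw [← closureD]; exact frontier_subset_closure hbfr
    have hbposC : ∀ y ∈ C, 0 < (inner ℝ b y : ℝ) := by
      intro y hy
      obtain ⟨ε, hε, hball⟩ := Metric.isOpen_iff.mp hopen y hy
      have hw : y - (ε / 2) • b ∈ C := by
        apply hball
        rw [Metric.mem_ball, dist_eq_norm]
        have heq : y - (ε / 2) • b - y = -((ε / 2) • b) := by abel
        rw [heq, norm_neg, norm_smul, Real.norm_eq_abs,
          abs_of_pos (by linarith : (0:ℝ) < ε / 2), hnb, mul_one]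
        linarith
      have h1 : 0 ≤ (inner ℝ (y - (ε / 2) • b) b : ℝ) :=
        (memKd b).mp hbKd _ (subset_closure hw)
      rw [inner_sub_left, real_inner_smul_left, real_inner_self_eq_norm_sq, hnb] at h1
      rw [real_inner_comm]
      nlinarith
    have hanotC : a ∉ C := by
      intro haC
      have := hbposC a haC
      rw [real_inner_comm] at this
      rw [hinn] at this
      exact lt_irrefl 0 this
    have haclos : a ∈ closure C := by
      apply hbid
      intro y hy
      rw [real_inner_comm]
      have hclosed : IsClosed {w : EuclideanSpace ℝ (Fin (n + 1)) | 0 ≤ (inner ℝ a w : ℝ)} :=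
        isClosed_le continuous_const (continuous_const.inner continuous_id)
      have : closure D ⊆ {w : EuclideanSpace ℝ (Fin (n + 1)) | 0 ≤ (inner ℝ a w : ℝ)} :=
        closure_minimal (fun w hw => (hpos w hw).le) hclosed
      rw [closureD] at this
      exact this hy
    have hafr : a ∈ frontier C := by
      rw [hopen.frontier_eq]; exact ⟨haclos, hanotC⟩
    exact ⟨hafr, hna, hnb, by rw [real_inner_comm]; exact hinn, hbposC⟩

/-- The duality map `D_Ω : (x,h) ↦ (h,x)` is a homeomorphism
from the augmented boundary of a properly convex open domain `Ω` (with cone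
`C`) onto the augmented boundary of its dual `Ω*` (with cone `C*`); its
inverse is `D_{Ω*}`, i.e. also given by coordinate swap. -/
theorem duality_map_homeomorphism
    {n : ℕ} (C : Set (EuclideanSpace ℝ (Fin (n + 1))))
    (hopen : IsOpen C) (hconv : Convex ℝ C)
    (hcone : ∀ x ∈ C, ∀ t : ℝ, 0 < t → t • x ∈ C)
    (hne : C.Nonempty)
    (hprop : ∀ v ∈ closure C, -v ∈ closure C → v = 0) :
    ∃ φ : ↥(augBoundary C) ≃ₜ ↥(augBoundary (innerStrictDualCone C)),
      (∀ p : ↥(augBoundary C),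
        (φ p : EuclideanSpace ℝ (Fin (n + 1)) × EuclideanSpace ℝ (Fin (n + 1))) =
          ((p : EuclideanSpace ℝ (Fin (n + 1)) × EuclideanSpace ℝ (Fin (n + 1))).2,
           (p : EuclideanSpace ℝ (Fin (n + 1)) × EuclideanSpace ℝ (Fin (n + 1))).1)) ∧
      (∀ q : ↥(augBoundary (innerStrictDualCone C)),
        (φ.symm q : EuclideanSpace ℝ (Fin (n + 1)) × EuclideanSpace ℝ (Fin (n + 1))) =
          ((q : EuclideanSpace ℝ (Fin (n + 1)) × EuclideanSpace ℝ (Fin (n + 1))).2,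
           (q : EuclideanSpace ℝ (Fin (n + 1)) × EuclideanSpace ℝ (Fin (n + 1))).1)) := by
  have key := augSwap_mem hopen hconv hcone hne hprop
  refine ⟨⟨⟨fun p => ⟨Prod.swap p.1, (key p.1).mp p.2⟩,
      fun q => ⟨Prod.swap q.1, (key (Prod.swap q.1)).mpr (by
        rw [Prod.swap_swap]; exact q.2)⟩,
      fun p => Subtype.ext (Prod.swap_swap _),
      fun q => Subtype.ext (Prod.swap_swap _)⟩,
      (continuous_swap.comp continuous_subtype_val).subtype_mk _,
      (continuous_swap.comp continuous_subtype_val).subtype_mk _⟩,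
    fun p => rfl, fun q => rfl⟩
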